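/- Let g(x) ∈ 𝔽_q[x] be monic irreducible of degree r with g(0) ≠ 0, let l ≥ 1, and let α ∈ 𝔽_q satisfy 𝔽_q = 𝔽_p(α). For all parameters 0 ≤ i < δ, 0 ≤ j < r, 1 ≤ k < l with p ∤ k, the multiplicative order of the class of a_{i,j,k}(x) = 1 + α^i x^j g(x)^k in the unit group of 𝔽_q[x]/(g(x)^l) equals p^{⌈log_p(l/k)⌉}, i.e. p^m where m is the least natural number with k·p^m ≥ l. -/

import Mathlib

open Polynomial

/-- For `0 ≤ i < δ`, `0 ≤ j < r`, `1 ≤ k < l` with `p ∤ k`, the multiplicative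
order of the class of `a_{i,j,k}(x) = 1 + α^i x^j g(x)^k` in `𝔽_q[x]/(g(x)^l)`
equals `p^{⌈log_p(l/k)⌉}`, i.e. `p^m` where `m` is the least natural number
with `k·p^m ≥ l`. -/
theorem stmt_16
    (p δ : ℕ) (hp : p.Prime) (hδ : 1 ≤ δ)
    (F : Type) [Field F] [Fintype F] [CharP F p] (hcard : Fintype.card F = p ^ δ)
    (α : F) (hα : ∀ y : F, ∃ c : Fin δ → ℕ, y = ∑ i, (c i : F) * α ^ (i : ℕ))
    (r l : ℕ) (g : Polynomial F)
    (hmonic : g.Monic) (hirr : Irreducible g) (hdeg : g.natDegree = r)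
    (hg0 : g.coeff 0 ≠ 0) (hl : 1 ≤ l)
    (i j k : ℕ) (hi : i < δ) (hj : j < r) (hk1 : 1 ≤ k) (hkl : k < l)
    (hpk : ¬ p ∣ k) :
    orderOf (Ideal.Quotient.mk (Ideal.span {g ^ l})
        (1 + Polynomial.C (α ^ i) * X ^ j * g ^ k))
      = p ^ sInf {m : ℕ | l ≤ k * p ^ m} := by
  haveI := Fact.mk hp
  have hg0' : g ≠ 0 := hirr.ne_zero
  have hgprime : Prime g := hirr.prime
  -- α ^ i ≠ 0
  have hαi : α ^ i ≠ 0 := by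
    rcases Nat.eq_zero_or_pos i with hi0 | hipos
    · simp [hi0]
    · apply pow_ne_zero
      intro hα0
      have hδ2 : 2 ≤ δ := by omega
      have hsurj : Function.Surjective ((ZMod.castHom (dvd_refl p) F)) := by
        intro y
        obtain ⟨c, hc⟩ := hα y
        refine ⟨(c ⟨0, by omega⟩ : ZMod p), ?_⟩
        rw [map_natCast, hc]
        rw [Finset.sum_eq_single (⟨0, by omega⟩ : Fin δ)]
        · simp
        · intro b _ hb
          have hbne : (b : ℕ) ≠ 0 := fun h => hb (Fin.ext h)
          simp [hα0, zero_pow hbne]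
        · simp
      have hle : Fintype.card F ≤ Fintype.card (ZMod p) :=
        Fintype.card_le_of_surjective _ hsurj
      rw [hcard, ZMod.card] at hle
      have h1 : p ^ 2 ≤ p ^ δ := Nat.pow_le_pow_right hp.pos hδ2
      have h2 := hp.two_le
      have h3 : p ^ 2 ≤ p := le_trans h1 hle
      rw [pow_two] at h3
      nlinarith
  -- g does not divide X
  have hgX : ¬ g ∣ X := by
    rintro ⟨q, hq⟩
    have hq0 : q ≠ 0 := by
      intro h; rw [h, mul_zero] at hq; exact X_ne_zero hq
    have hdeg1 : (1 : ℕ) = g.natDegree + q.natDegree := by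
      rw [← natDegree_X (R := F), hq, natDegree_mul hg0' hq0]
    have hr1 : 1 ≤ r := by omega
    have hqd : q.natDegree = 0 := by omega
    have hqc : q = C (q.coeff 0) := eq_C_of_natDegree_eq_zero hqd
    have hc0 : (X : Polynomial F).coeff 0 = g.coeff 0 * q.coeff 0 := by
      rw [hq, mul_coeff_zero]
    simp only [coeff_X_zero] at hc0
    have hq00 : q.coeff 0 = 0 := by
      rcases mul_eq_zero.mp hc0.symm with h | h
      · exact absurd h hg0
      · exact h
    rw [hq00, map_zero] at hqc
    exact hq0 hqc
  -- key divisibility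
  have key : ∀ N : ℕ, (g ^ l ∣ (C (α ^ i) * X ^ j * g ^ k) ^ N ↔ l ≤ k * N) := by
    intro N
    have hrw : (C (α ^ i) * X ^ j * g ^ k) ^ N
        = (C (α ^ i) ^ N * X ^ (j * N)) * g ^ (k * N) := by
      rw [mul_pow, mul_pow, ← pow_mul, ← pow_mul]
    rw [hrw]
    constructor
    · intro h
      by_contra hlt
      push_neg at hlt
      have h1 : g ^ (k * N) * g ∣ g ^ (k * N) * (C (α ^ i) ^ N * X ^ (j * N)) := by
        rw [← pow_succ]
        exact dvd_trans (pow_dvd_pow g (by omega)) (dvd_trans h (dvd_of_eq (mul_comm _ _)))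
      have h2 : g ∣ C (α ^ i) ^ N * X ^ (j * N) :=
        (mul_dvd_mul_iff_left (pow_ne_zero _ hg0')).mp h1
      rcases hgprime.2.2 _ _ h2 with h3 | h3
      · exact hirr.not_isUnit (isUnit_of_dvd_unit h3
          ((isUnit_C.mpr (IsUnit.mk0 _ hαi)).pow N))
      · exact hgX (hgprime.dvd_of_dvd_pow h3)
    · intro h
      exact dvd_trans (pow_dvd_pow g h) (dvd_mul_left _ _)
  -- quotient setup
  set I := Ideal.span {(g : Polynomial F) ^ l} with hI
  set A := Ideal.Quotient.mk I (C (α ^ i) * X ^ j * g ^ k) with hA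
  have keyA : ∀ N : ℕ, (A ^ N = 0 ↔ l ≤ k * N) := by
    intro N
    rw [hA, ← map_pow, Ideal.Quotient.eq_zero_iff_mem, hI, Ideal.mem_span_singleton]
    exact key N
  have hItop : I ≠ ⊤ := by
    rw [hI, Ne, Ideal.span_singleton_eq_top]
    intro hu
    exact hirr.not_isUnit ((isUnit_pow_iff (by omega : l ≠ 0)).mp hu)
  haveI : Nontrivial (Polynomial F ⧸ I) := Ideal.Quotient.nontrivial_iff.mpr hItop
  haveI : CharP (Polynomial F ⧸ I) p := by
    refine charP_of_injective_ringHom (f := (Ideal.Quotient.mk I).comp Polynomial.C) ?_ p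
    exact RingHom.injective _
  -- frobenius
  have frob : ∀ m : ℕ, (1 + A) ^ p ^ m = 1 + A ^ p ^ m := by
    intro m
    rw [add_pow_char_pow, one_pow]
  -- the order
  have hSne : sInf {m : ℕ | l ≤ k * p ^ m} ∈ {m : ℕ | l ≤ k * p ^ m} := by
    apply Nat.sInf_mem
    refine ⟨l, ?_⟩
    have h1 : l < p ^ l := Nat.lt_pow_self hp.one_lt
    have h2 : p ^ l ≤ k * p ^ l := Nat.le_mul_of_pos_left _ (by omega)
    simp only [Set.mem_setOf_eq]
    omega
  set M := sInf {m : ℕ | l ≤ k * p ^ m} with hM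
  have hpow1 : (1 + A) ^ p ^ M = 1 := by
    rw [frob, (keyA (p ^ M)).mpr hSne, add_zero]
  have hdvd : orderOf (1 + A) ∣ p ^ M := orderOf_dvd_of_pow_eq_one hpow1
  obtain ⟨e, he, heq⟩ := (Nat.dvd_prime_pow hp).mp hdvd
  have hmk : Ideal.Quotient.mk I (1 + C (α ^ i) * X ^ j * g ^ k) = 1 + A := by
    rw [map_add, map_one, hA]
  rw [hmk, heq]
  congr 1
  by_contra hne
  have helt : e < M := lt_of_le_of_ne he hne
  have : e ∈ {m : ℕ | l ≤ k * p ^ m} := by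
    have hp1 : (1 + A) ^ p ^ e = 1 := by rw [← heq]; exact pow_orderOf_eq_one _
    rw [frob] at hp1
    have : A ^ p ^ e = 0 := by
      have h' : (1 : Polynomial F ⧸ I) + A ^ p ^ e = 1 + 0 := by rw [add_zero]; exact hp1
      exact add_left_cancel h'
    exact (keyA (p ^ e)).mp this
  exact Nat.notMem_of_lt_sInf helt this
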